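/- If X is an n×n complex matrix satisfying X³ + c²X = 0 with c a nonzero real, then exp(X) = I + (sin c / c)·X + ((1 - cos c)/c²)·X². -/

import Mathlib

open Matrix NormedSpace
open scoped Nat

theorem exp_of_cubic_minpoly {n : ℕ} (X : Matrix (Fin n) (Fin n) ℂ)
    (c : ℝ) (hc : c ≠ 0)
    (hmin : X ^ 3 + ((c : ℂ) ^ 2) • X = 0) :
    exp X = (1 : Matrix (Fin n) (Fin n) ℂ)
      + (((Real.sin c / c : ℝ) : ℂ)) • X
      + ((((1 - Real.cos c) / c ^ 2 : ℝ) : ℂ)) • X ^ 2 := by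
  have hcC : (c : ℂ) ≠ 0 := by exact_mod_cast hc
  have hX3 : X ^ 3 = (-(c : ℂ) ^ 2) • X := by
    have h := hmin
    rw [add_eq_zero_iff_eq_neg] at h
    rw [h, neg_smul]
  -- odd powers
  have hodd : ∀ k : ℕ, X ^ (2 * k + 1) = ((-(c : ℂ) ^ 2)) ^ k • X := by
    intro k
    induction k with
    | zero => simp
    | succ k ih =>
      have h2 : 2 * (k + 1) + 1 = (2 * k + 1) + 2 := by ring
      rw [h2, pow_add, ih, smul_mul_assoc]
      have h3 : X * X ^ 2 = X ^ 3 := (pow_succ' X 2).symm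
      rw [h3, hX3, smul_smul, ← pow_succ]
  have heven : ∀ k : ℕ, X ^ (2 * k + 2) = ((-(c : ℂ) ^ 2)) ^ k • X ^ 2 := by
    intro k
    have h2 : 2 * k + 2 = (2 * k + 1) + 1 := by ring
    rw [h2, pow_succ, hodd, smul_mul_assoc, ← pow_two]
  -- scalar sine series
  have hfac : ∀ m : ℕ, ((Nat.factorial m : ℂ)) ≠ 0 := fun m =>
    Nat.cast_ne_zero.mpr (Nat.factorial_ne_zero m)
  have hsin : HasSum (fun k : ℕ => (((2 * k + 1)! : ℂ))⁻¹ * (-(c : ℂ) ^ 2) ^ k)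
      (((Real.sin c / c : ℝ) : ℂ)) := by
    have h := (Complex.hasSum_sin (c : ℂ)).mul_right ((c : ℂ))⁻¹
    have hterm : (fun k : ℕ => (-1 : ℂ) ^ k * (c : ℂ) ^ (2 * k + 1) / ((2 * k + 1)! : ℂ)
          * ((c : ℂ))⁻¹)
        = fun k : ℕ => (((2 * k + 1)! : ℂ))⁻¹ * (-(c : ℂ) ^ 2) ^ k := by
      funext k
      have hpow : (c : ℂ) ^ (2 * k + 1) * ((c : ℂ))⁻¹ = (c : ℂ) ^ (2 * k) := by
        rw [pow_succ, mul_assoc, mul_inv_cancel₀ hcC, mul_one]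
      rw [div_mul_eq_mul_div, mul_assoc, hpow, neg_pow ((c : ℂ) ^ 2) k, ← pow_mul]
      ring
    rw [hterm] at h
    have hval : Complex.sin (c : ℂ) * ((c : ℂ))⁻¹ = ((Real.sin c / c : ℝ) : ℂ) := by
      rw [Complex.ofReal_div, Complex.ofReal_sin, div_eq_mul_inv]
    rwa [hval] at h
  -- scalar cosine series
  have hcos : HasSum (fun k : ℕ => (((2 * k + 2)! : ℂ))⁻¹ * (-(c : ℂ) ^ 2) ^ k)
      ((((1 - Real.cos c) / c ^ 2 : ℝ) : ℂ)) := by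
    have h0 := Complex.hasSum_cos (c : ℂ)
    have h1 : HasSum (fun k : ℕ => (-1 : ℂ) ^ (k + 1) * (c : ℂ) ^ (2 * (k + 1))
        / ((2 * (k + 1))! : ℂ)) (Complex.cos (c : ℂ) - 1) := by
      have := (hasSum_nat_add_iff
        (f := fun k : ℕ => (-1 : ℂ) ^ k * (c : ℂ) ^ (2 * k) / ((2 * k)! : ℂ)) 1
        (g := Complex.cos (c : ℂ) - 1)).mpr
      simpa using this (by simpa using h0)
    have h2 := h1.mul_right ((-(c : ℂ) ^ 2))⁻¹
    have hterm : (fun k : ℕ => (-1 : ℂ) ^ (k + 1) * (c : ℂ) ^ (2 * (k + 1))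
          / ((2 * (k + 1))! : ℂ) * ((-(c : ℂ) ^ 2))⁻¹)
        = fun k : ℕ => (((2 * k + 2)! : ℂ))⁻¹ * (-(c : ℂ) ^ 2) ^ k := by
      funext k
      have he : 2 * (k + 1) = 2 * k + 2 := by ring
      have hpow : (c : ℂ) ^ (2 * k + 2) * ((c : ℂ) ^ 2)⁻¹ = (c : ℂ) ^ (2 * k) := by
        rw [pow_add, mul_assoc, mul_inv_cancel₀ (pow_ne_zero 2 hcC), mul_one]
      rw [he, ← neg_inv, mul_neg, div_mul_eq_mul_div, mul_assoc, hpow, neg_pow ((c : ℂ) ^ 2) k, ← pow_mul]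
      ring
    rw [hterm] at h2
    have hval : (Complex.cos (c : ℂ) - 1) * ((-(c : ℂ) ^ 2))⁻¹
        = (((1 - Real.cos c) / c ^ 2 : ℝ) : ℂ) := by
      rw [Complex.ofReal_div, Complex.ofReal_sub, Complex.ofReal_cos, Complex.ofReal_one,
        Complex.ofReal_pow]
      field_simp
      ring
    rwa [hval] at h2
  -- the matrix series
  set f : ℕ → Matrix (Fin n) (Fin n) ℂ := fun m => ((m ! : ℂ))⁻¹ • X ^ m with hf
  have hoddsum : HasSum (fun k : ℕ => f (2 * k + 1)) ((((Real.sin c / c : ℝ) : ℂ)) • X) := by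
    have h := hsin.smul_const X
    convert h using 2 with k
    rw [hf]
    simp only
    rw [hodd k, smul_smul]
  have hevensum : HasSum (fun k : ℕ => f (2 * k))
      (1 + ((((1 - Real.cos c) / c ^ 2 : ℝ) : ℂ)) • X ^ 2) := by
    have h := hcos.smul_const (X ^ 2)
    have h1 : HasSum (fun k : ℕ => f (2 * (k + 1)))
        ((((1 - Real.cos c) / c ^ 2 : ℝ) : ℂ) • X ^ 2) := by
      convert h using 2 with k
      rw [hf]
      simp only
      have he : 2 * (k + 1) = 2 * k + 2 := by ring
      rw [he, heven k, smul_smul]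
    have h2 := (hasSum_nat_add_iff (f := fun k : ℕ => f (2 * k)) 1).mp
      (by simpa [Nat.add_comm] using h1)
    simpa [hf, add_comm] using h2
  have hsum : HasSum f ((1 : Matrix (Fin n) (Fin n) ℂ)
      + (((Real.sin c / c : ℝ) : ℂ)) • X
      + ((((1 - Real.cos c) / c ^ 2 : ℝ) : ℂ)) • X ^ 2) := by
    have := hevensum.even_add_odd hoddsum
    convert this using 1
    abel
  rw [exp_eq_tsum (𝕂 := ℂ)]
  exact hsum.tsum_eq
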